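/- If u_0, u_1, u_2 are unit vectors in a real inner product space with pairwise inner products c_{01}, c_{02}, c_{12} satisfying 1 + c_{01} + c_{02} + c_{12} = -1/2 (i.e., J_3 = -1/8), then c_{01} = c_{02} = c_{12} = -1/2. -/

import Mathlib

theorem stmt_8 {F : Type*} [NormedAddCommGroup F] [InnerProductSpace ℝ F]
    (u : Fin 3 → F) (hu : ∀ i, ‖u i‖ = 1)
    (h : (1 : ℝ) + inner ℝ (u 0) (u 1) + inner ℝ (u 0) (u 2) + inner ℝ (u 1) (u 2) = -(1 / 2)) :
    (inner ℝ (u 0) (u 1) : ℝ) = -(1 / 2) ∧ (inner ℝ (u 0) (u 2) : ℝ) = -(1 / 2) ∧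
      (inner ℝ (u 1) (u 2) : ℝ) = -(1 / 2) := by
  have h0 : (inner ℝ (u 0) (u 0) : ℝ) = 1 := by
    rw [real_inner_self_eq_norm_sq, hu 0]; norm_num
  have h1 : (inner ℝ (u 1) (u 1) : ℝ) = 1 := by
    rw [real_inner_self_eq_norm_sq, hu 1]; norm_num
  have h2 : (inner ℝ (u 2) (u 2) : ℝ) = 1 := by
    rw [real_inner_self_eq_norm_sq, hu 2]; norm_num
  have hs : u 0 + u 1 + u 2 = 0 := by
    rw [← inner_self_eq_zero (𝕜 := ℝ)]
    simp only [inner_add_add_self, inner_add_left, inner_add_right]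
    linarith [real_inner_comm (u 1) (u 0), real_inner_comm (u 2) (u 0),
      real_inner_comm (u 2) (u 1)]
  have e01 : u 0 + u 1 = -u 2 := by
    have := hs; rw [add_eq_zero_iff_eq_neg] at this; exact this
  have e02 : u 0 + u 2 = -u 1 := by
    have : u 0 + u 2 + u 1 = 0 := by rw [← hs]; abel
    rw [add_eq_zero_iff_eq_neg] at this; exact this
  have e12 : u 1 + u 2 = -u 0 := by
    have : u 1 + u 2 + u 0 = 0 := by rw [← hs]; abel
    rw [add_eq_zero_iff_eq_neg] at this; exact this
  refine ⟨?_, ?_, ?_⟩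
  · have := congrArg (fun v : F => (inner ℝ v v : ℝ)) e01
    simp only [inner_add_add_self, inner_neg_neg] at this
    linarith [real_inner_comm (u 1) (u 0)]
  · have := congrArg (fun v : F => (inner ℝ v v : ℝ)) e02
    simp only [inner_add_add_self, inner_neg_neg] at this
    linarith [real_inner_comm (u 2) (u 0)]
  · have := congrArg (fun v : F => (inner ℝ v v : ℝ)) e12
    simp only [inner_add_add_self, inner_neg_neg] at this
    linarith [real_inner_comm (u 2) (u 1)]
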